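/- arXiv:1711.09086 — 3 statements merged into one kernel-verified Lean document; each statement's English description precedes it below -/
import Mathlib

section
/- Let λ_1,…,λ_N ∈ ℂ and let σ be an involution of the index set {1,…,N} such that λ_{σ(n)} = conj(λ_n) for all n (so each graph frequency is real or belongs to a complex conjugate pair). Let ĥ ∈ ℂ^N satisfy ĥ_{σ(n)} = conj(ĥ_n) for all n. Let Ψ ∈ ℂ^{N×(K+1)} be the Vandermonde matrix with entries [Ψ]_{n,k} = λ_n^{k-1}, and suppose Ψ^H Ψ is invertible. Then the least-squares solution g = (Ψ^H Ψ)^{-1} Ψ^H ĥ of min_{g∈ℂ^{K+1}} ‖ĥ − Ψ g‖², i.e., the FIR graph filter coefficient vector, has all entries real. -/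
open Matrix Finset

/-- The least-squares FIR graph filter coefficients are real-valued when the
graph frequencies and the desired frequency response are conjugate-symmetric. -/
theorem fir_lls_coefficients_real
    (N K : ℕ) (lam : Fin N → ℂ)
    (σ : Fin N → Fin N) (hσ : Function.Involutive σ)
    (hlam : ∀ n, lam (σ n) = starRingEnd ℂ (lam n))
    (hhat : Fin N → ℂ)
    (hh : ∀ n, hhat (σ n) = starRingEnd ℂ (hhat n))
    (Ψ : Matrix (Fin N) (Fin (K + 1)) ℂ)
    (hΨ : ∀ n k, Ψ n k = lam n ^ (k : ℕ))
    (hinv : IsUnit (Ψᴴ * Ψ))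
    (g : Fin (K + 1) → ℂ)
    (hg : g = (Ψᴴ * Ψ)⁻¹ *ᵥ (Ψᴴ *ᵥ hhat)) :
    ∀ k, (g k).im = 0 := by
  set c := starRingEnd ℂ with hc
  set A := Ψᴴ * Ψ with hAdef
  set b := Ψᴴ *ᵥ hhat with hbdef
  have hA : A.map c = A := by
    ext k l
    simp only [Matrix.map_apply, hAdef, Matrix.mul_apply, Matrix.conjTranspose_apply,
      map_sum, _root_.map_mul, hc, starRingEnd_apply, star_star]
    rw [← Equiv.sum_comp (hσ.toPerm σ) (fun n => star (Ψ n k) * Ψ n l)]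
    refine Finset.sum_congr rfl fun n _ => ?_
    simp only [Function.Involutive.coe_toPerm, hΨ, hlam, hc, starRingEnd_apply, star_pow,
      star_star]
    try ring
  have hb : ∀ k, c (b k) = b k := by
    intro k
    simp only [hbdef, Matrix.mulVec, dotProduct, Matrix.conjTranspose_apply,
      map_sum, _root_.map_mul, hc, starRingEnd_apply, star_star]
    rw [← Equiv.sum_comp (hσ.toPerm σ) (fun n => star (Ψ n k) * hhat n)]
    refine Finset.sum_congr rfl fun n _ => ?_
    simp only [Function.Involutive.coe_toPerm, hΨ, hlam, hh, hc, starRingEnd_apply, star_pow,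
      star_star]
  have hAinv : (A⁻¹).map c = A⁻¹ := by
    have h1 : A.map c = (Aᴴ)ᵀ := by
      rw [Matrix.conjTranspose, ← Matrix.transpose_map, Matrix.transpose_transpose]
      rfl
    have h2 : (A⁻¹).map c = ((A⁻¹)ᴴ)ᵀ := by
      rw [Matrix.conjTranspose, ← Matrix.transpose_map, Matrix.transpose_transpose]
      rfl
    rw [h2, Matrix.conjTranspose_nonsing_inv, Matrix.transpose_nonsing_inv, ← h1, hA]
  intro k
  have key : c (g k) = g k := by
    rw [hg]
    simp only [Matrix.mulVec, dotProduct, map_sum]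
    refine Finset.sum_congr rfl fun l _ => ?_
    have h1 : c (A⁻¹ k l) = A⁻¹ k l := by
      conv_rhs => rw [← hAinv]
      rfl
    rw [_root_.map_mul, h1, hb]
  exact Complex.conj_eq_iff_im.mp key
end

section
/- Let λ_1,…,λ_N ∈ ℂ and let σ be an involution of {1,…,N} with λ_{σ(n)} = conj(λ_n) for all n, and let ĥ ∈ ℂ^N satisfy ĥ_{σ(n)} = conj(ĥ_n). Suppose (a,b) ∈ ℂ^{P+1} × ℂ^{Q+1} is the unique minimizer, subject to a_0 = 1, of the modified Prony error E(a,b) = Σ_{n=1}^N | ĥ_n (Σ_{p=0}^P a_p λ_n^p) − Σ_{q=0}^Q b_q λ_n^q |². Then all entries of a and b are real. -/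
open Matrix Finset

/-- The unique minimizer of the modified Prony error subject to `a 0 = 1` has
real-valued ARMA coefficients, given conjugate-symmetric data. -/
theorem prony_ls_coefficients_real
    (N P Q : ℕ) (lam : Fin N → ℂ)
    (σ : Fin N → Fin N) (hσ : Function.Involutive σ)
    (hlam : ∀ n, lam (σ n) = starRingEnd ℂ (lam n))
    (hhat : Fin N → ℂ)
    (hh : ∀ n, hhat (σ n) = starRingEnd ℂ (hhat n))
    (E : (Fin (P + 1) → ℂ) → (Fin (Q + 1) → ℂ) → ℝ)
    (hE : ∀ a b, E a b =
      ∑ n, ‖hhat n * (∑ p, a p * lam n ^ (p : ℕ))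
        - ∑ q, b q * lam n ^ (q : ℕ)‖ ^ 2)
    (a : Fin (P + 1) → ℂ) (b : Fin (Q + 1) → ℂ)
    (ha0 : a 0 = 1)
    (hmin : ∀ a' b', a' 0 = 1 → E a b ≤ E a' b')
    (huniq : ∀ a' b', a' 0 = 1 → E a' b' = E a b → a' = a ∧ b' = b) :
    (∀ p, (a p).im = 0) ∧ (∀ q, (b q).im = 0) := by
  set a' : Fin (P + 1) → ℂ := fun p => starRingEnd ℂ (a p) with ha'
  set b' : Fin (Q + 1) → ℂ := fun q => starRingEnd ℂ (b q) with hb'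
  have ha'0 : a' 0 = 1 := by simp [ha', ha0]
  have hEeq : E a' b' = E a b := by
    rw [hE, hE]
    rw [← Equiv.sum_comp (hσ.toPerm σ)
      (fun n => ‖hhat n * (∑ p, a' p * lam n ^ (p : ℕ))
        - ∑ q, b' q * lam n ^ (q : ℕ)‖ ^ 2)]
    refine Finset.sum_congr rfl fun n _ => ?_
    simp only [Function.Involutive.coe_toPerm, hlam, hh, ha', hb']
    have : hhat n * (∑ p, a p * lam n ^ (p : ℕ)) - ∑ q, b q * lam n ^ (q : ℕ)
        = starRingEnd ℂ (starRingEnd ℂ (hhat n)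
            * (∑ p, starRingEnd ℂ (a p) * starRingEnd ℂ (lam n) ^ (p : ℕ))
          - ∑ q, starRingEnd ℂ (b q) * starRingEnd ℂ (lam n) ^ (q : ℕ)) := by
      simp [map_sub, _root_.map_mul, map_sum, map_pow]
    rw [this, Complex.norm_conj]
  obtain ⟨haa, hbb⟩ := huniq a' b' ha'0 hEeq
  constructor
  · intro p
    have h := congrFun haa p
    have h2 : -(a p).im = (a p).im := congrArg Complex.im h
    linarith
  · intro q
    have h := congrFun hbb q
    have h2 : -(b q).im = (b q).im := congrArg Complex.im h
    linarith
end

section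
/- Let λ_1,…,λ_N ∈ ℂ and let σ be an involution of {1,…,N} with λ_{σ(n)} = conj(λ_n) for all n, and let ĥ ∈ ℂ^N satisfy ĥ_{σ(n)} = conj(ĥ_n). Let Ψ_{Q+1} ∈ ℂ^{N×(Q+1)} and Ψ_{P+1} ∈ ℂ^{N×(P+1)} be the Vandermonde matrices with entries λ_n^{k-1}, assume Ψ_{Q+1} has full column rank, and set P⊥ = I_N − Ψ_{Q+1}(Ψ_{Q+1}^H Ψ_{Q+1})^{-1} Ψ_{Q+1}^H. (i) If a ∈ ℂ^{P+1} is the unique minimizer, subject to a_0 = 1, of ‖P⊥ M a‖² where M ∈ ℂ^{N×(P+1)} has entries [M]_{n,p} = ĥ_n λ_n^{p-1}, then all entries of a are real. (ii) If moreover α_n = Σ_{p=0}^P a_p λ_n^p ≠ 0 for all n and b ∈ ℂ^{Q+1} is the unique minimizer of Σ_{n=1}^N | ĥ_n − (Σ_{q=0}^Q b_q λ_n^q)/α_n |², then all entries of b are real. -/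
open Matrix Finset

/-- Prony's projection method yields real-valued ARMA coefficients: (i) the
unique minimizer `a` (with `a 0 = 1`) of the projected modified error is
real-valued, and (ii) the unique minimizer `b` of the true error is
real-valued, for conjugate-symmetric data. -/
theorem prony_projection_coefficients_real
    (N P Q : ℕ) (lam : Fin N → ℂ)
    (σ : Fin N → Fin N) (hσ : Function.Involutive σ)
    (hlam : ∀ n, lam (σ n) = starRingEnd ℂ (lam n))
    (hhat : Fin N → ℂ)
    (hh : ∀ n, hhat (σ n) = starRingEnd ℂ (hhat n))
    (ΨQ : Matrix (Fin N) (Fin (Q + 1)) ℂ)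
    (hΨQ : ∀ n k, ΨQ n k = lam n ^ (k : ℕ))
    (ΨP : Matrix (Fin N) (Fin (P + 1)) ℂ)
    (hΨP : ∀ n k, ΨP n k = lam n ^ (k : ℕ))
    (hfc : Function.Injective ΨQ.mulVec)
    (Pperp : Matrix (Fin N) (Fin N) ℂ)
    (hPperp : Pperp = 1 - ΨQ * (ΨQᴴ * ΨQ)⁻¹ * ΨQᴴ)
    (M : Matrix (Fin N) (Fin (P + 1)) ℂ)
    (hM : ∀ n p, M n p = hhat n * lam n ^ (p : ℕ))
    -- (i) `a` is the unique minimizer of `‖Pperp M a‖²` subject to `a 0 = 1`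
    (a : Fin (P + 1) → ℂ)
    (ha0 : a 0 = 1)
    (hamin : ∀ a', a' 0 = 1 →
      ∑ n, ‖(Pperp *ᵥ (M *ᵥ a)) n‖ ^ 2 ≤
        ∑ n, ‖(Pperp *ᵥ (M *ᵥ a')) n‖ ^ 2)
    (hauniq : ∀ a', a' 0 = 1 →
      (∑ n, ‖(Pperp *ᵥ (M *ᵥ a')) n‖ ^ 2 =
        ∑ n, ‖(Pperp *ᵥ (M *ᵥ a)) n‖ ^ 2) → a' = a)
    -- (ii) `b` is the unique minimizer of the true error with denominator `α`
    (α : Fin N → ℂ)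
    (hα : ∀ n, α n = ∑ p, a p * lam n ^ (p : ℕ))
    (hα0 : ∀ n, α n ≠ 0)
    (b : Fin (Q + 1) → ℂ)
    (hbmin : ∀ b' : Fin (Q + 1) → ℂ,
      ∑ n, ‖hhat n - (∑ q, b q * lam n ^ (q : ℕ)) / α n‖ ^ 2 ≤
        ∑ n, ‖hhat n - (∑ q, b' q * lam n ^ (q : ℕ)) / α n‖ ^ 2)
    (hbuniq : ∀ b' : Fin (Q + 1) → ℂ,
      (∑ n, ‖hhat n - (∑ q, b' q * lam n ^ (q : ℕ)) / α n‖ ^ 2 =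
        ∑ n, ‖hhat n - (∑ q, b q * lam n ^ (q : ℕ)) / α n‖ ^ 2) → b' = b) :
    (∀ p, (a p).im = 0) ∧ (∀ q, (b q).im = 0) := by
  classical
  set c := starRingEnd ℂ with hc
  let e : Equiv.Perm (Fin N) := hσ.toPerm
  have he : ∀ n, e n = σ n := fun n => rfl
  have hΨQc : ∀ n k, ΨQ (σ n) k = c (ΨQ n k) := by
    intro n k; rw [hΨQ, hΨQ, hlam, _root_.map_pow]
  have hMc : ∀ n p, M (σ n) p = c (M n p) := by
    intro n p; rw [hM, hM, hh, hlam, _root_.map_mul, _root_.map_pow]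
  set G := ΨQᴴ * ΨQ with hGdef
  have hGc : ∀ i j, c (G i j) = G i j := by
    intro i j
    rw [hGdef, Matrix.mul_apply, _root_.map_sum]
    refine (Fintype.sum_equiv e _ _ ?_).symm
    intro n
    rw [Matrix.conjTranspose_apply, Matrix.conjTranspose_apply, he,
      hΨQc, hΨQc, _root_.map_mul]
    simp [hc, Complex.star_def, Complex.conj_conj]
  have hGconj : Gᴴᵀ = G := by
    ext i j
    rw [Matrix.transpose_apply, Matrix.conjTranspose_apply]
    exact hGc i j
  have hGinvM : (G⁻¹)ᴴᵀ = G⁻¹ := by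
    rw [Matrix.conjTranspose_nonsing_inv, Matrix.transpose_nonsing_inv, hGconj]
  have hGinv : ∀ i j, c (G⁻¹ i j) = G⁻¹ i j := by
    intro i j
    have := congrFun (congrFun hGinvM i) j
    rwa [Matrix.transpose_apply, Matrix.conjTranspose_apply] at this
  have hPc : ∀ m n, Pperp (σ m) (σ n) = c (Pperp m n) := by
    intro m n
    rw [hPperp]
    simp only [Matrix.sub_apply, _root_.map_sub]
    congr 1
    · simp only [Matrix.one_apply, hσ.injective.eq_iff]
      split <;> simp [hc]
    · rw [Matrix.mul_apply, Matrix.mul_apply, _root_.map_sum]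
      refine Finset.sum_congr rfl fun j _ => ?_
      rw [Matrix.mul_apply, Matrix.mul_apply, _root_.map_mul, _root_.map_sum,
        Matrix.conjTranspose_apply, Matrix.conjTranspose_apply, hΨQc]
      congr 1
      refine Finset.sum_congr rfl fun i _ => ?_
      rw [hΨQc, _root_.map_mul, hGinv]
  have ha : ∀ p, c (a p) = a p := by
    have hw : ∀ n, (M *ᵥ fun p => c (a p)) n = c ((M *ᵥ a) (σ n)) := by
      intro n
      rw [Matrix.mulVec, Matrix.mulVec, dotProduct, dotProduct, _root_.map_sum]
      refine Finset.sum_congr rfl fun p _ => ?_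
      rw [_root_.map_mul]
      have h2 := hMc (σ n) p
      rw [hσ n] at h2
      rw [h2]
    have hv : ∀ m, (Pperp *ᵥ (M *ᵥ fun p => c (a p))) m
        = c ((Pperp *ᵥ (M *ᵥ a)) (σ m)) := by
      intro m
      rw [Matrix.mulVec, dotProduct, Matrix.mulVec, dotProduct, _root_.map_sum]
      refine Fintype.sum_equiv e _ _ ?_
      intro n
      rw [he, hw, _root_.map_mul]
      congr 1
      rw [hPc m n]
      simp [hc, Complex.conj_conj]
    have hobj : ∑ n, ‖(Pperp *ᵥ (M *ᵥ fun p => c (a p))) n‖ ^ 2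
        = ∑ n, ‖(Pperp *ᵥ (M *ᵥ a)) n‖ ^ 2 := by
      refine Fintype.sum_equiv e _ _ ?_
      intro n
      show ‖(Pperp *ᵥ (M *ᵥ fun p => c (a p))) n‖ ^ 2
        = ‖(Pperp *ᵥ (M *ᵥ a)) (e n)‖ ^ 2
      rw [he, hv]
      simp [hc]
    have ha0' : (fun p => c (a p)) 0 = 1 := by simp [ha0, hc]
    have h3 := hauniq _ ha0' hobj
    intro p
    exact congrFun h3 p
  have haim : ∀ p, (a p).im = 0 := by
    intro p
    have h4 := ha p
    rw [hc, Complex.conj_eq_iff_im] at h4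
    exact h4
  refine ⟨haim, ?_⟩
  have hαc : ∀ n, α (σ n) = c (α n) := by
    intro n
    rw [hα, hα, _root_.map_sum]
    refine Finset.sum_congr rfl fun p _ => ?_
    rw [_root_.map_mul, _root_.map_pow, hlam, ha]
  have hb : ∀ q, c (b q) = b q := by
    have hterm : ∀ n,
        hhat (σ n) - (∑ q, c (b q) * lam (σ n) ^ (q : ℕ)) / α (σ n)
        = c (hhat n - (∑ q, b q * lam n ^ (q : ℕ)) / α n) := by
      intro n
      have hq : ∀ q : Fin (Q + 1),
          c (b q) * lam (σ n) ^ (q : ℕ) = c (b q * lam n ^ (q : ℕ)) := by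
        intro q; rw [_root_.map_mul, _root_.map_pow, hlam]
      rw [hh, hαc, Finset.sum_congr rfl (fun q _ => hq q), ← _root_.map_sum,
        ← map_div₀, ← _root_.map_sub]
    have hobj : ∑ n, ‖hhat n - (∑ q, c (b q) * lam n ^ (q : ℕ)) / α n‖ ^ 2
        = ∑ n, ‖hhat n - (∑ q, b q * lam n ^ (q : ℕ)) / α n‖ ^ 2 := by
      refine (Fintype.sum_equiv e _ _ ?_).symm
      intro n
      show ‖hhat n - (∑ q, b q * lam n ^ (q : ℕ)) / α n‖ ^ 2
        = ‖hhat (e n) - (∑ q, c (b q) * lam (e n) ^ (q : ℕ)) / α (e n)‖ ^ 2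
      rw [he, hterm, hc, Complex.norm_conj]
    have h5 := hbuniq _ hobj
    intro q
    exact congrFun h5 q
  intro q
  have h6 := hb q
  rw [hc, Complex.conj_eq_iff_im] at h6
  exact h6
end
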